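/- arXiv:1604.04956 — 6 statements merged into one kernel-verified Lean document; each statement's English description precedes it below -/
import Mathlib

section
/- Let B be a matroid on a finite set X (satisfying the exchange property). Then B satisfies the symmetric exchange property: for bases B1, B2 and x ∈ B1 \ B2, there exists y ∈ B2 \ B1 such that both B1 △ {x,y} and B2 △ {x,y} are bases, where △ denotes symmetric difference. -/
open Finset

variable {α : Type*}

def ExchangeProperty [DecidableEq α] (B : Finset (Finset α)) : Prop :=
  ∀ B1 ∈ B, ∀ B2 ∈ B, ∀ x ∈ B1 \ B2, ∃ y ∈ B2 \ B1, insert y (B1.erase x) ∈ B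

def IsMatroid [DecidableEq α] (B : Finset (Finset α)) : Prop :=
  B.Nonempty ∧ ExchangeProperty B

def AlmostBasis [DecidableEq α] (B : Finset (Finset α)) (A : Finset α) : Prop :=
  ∃ B0 ∈ B, ∃ x ∈ B0, A = B0.erase x

def OverBasis [DecidableEq α] (B : Finset (Finset α)) (Q : Finset α) : Prop :=
  ∃ B0 ∈ B, ∃ y, y ∉ B0 ∧ Q = insert y B0

def Indep [DecidableEq α] (B : Finset (Finset α)) (S : Finset α) : Prop :=
  ∃ B0 ∈ B, S ⊆ B0

def IsCircuit [DecidableEq α] (B : Finset (Finset α)) (C : Finset α) : Prop :=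
  ¬ Indep B C ∧ ∀ x ∈ C, Indep B (C.erase x)

def USet [DecidableEq α] [Fintype α] (B : Finset (Finset α)) (D : Finset α) : Finset α :=
  Finset.univ.filter fun x => x ∉ D ∧ insert x D ∈ B

def CSet [DecidableEq α] (B : Finset (Finset α)) (Q : Finset α) : Finset α :=
  Q.filter fun x => Q.erase x ∈ B

def IsLinking [DecidableEq α] (B Bs : Finset (Finset α)) (L : Finset α → Finset α) : Prop :=
  Set.BijOn L ↑B ↑Bs ∧
  ∀ B0 ∈ B, ∀ a b : α, a ≠ b →
    (B0.image (Equiv.swap a b) ∈ B →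
      (L B0).image (Equiv.swap a b) ∈ Bs ∧
      (L B0).image (Equiv.swap a b) = L (B0.image (Equiv.swap a b))) ∧
    ((L B0).image (Equiv.swap a b) ∈ Bs →
      B0.image (Equiv.swap a b) ∈ B ∧
      (L B0).image (Equiv.swap a b) = L (B0.image (Equiv.swap a b)))

theorem symmetric_exchange [DecidableEq α] (B : Finset (Finset α))
    (hB : IsMatroid B) (B1 B2 : Finset α) (h1 : B1 ∈ B) (h2 : B2 ∈ B)
    (x : α) (hx : x ∈ B1 \ B2) :
    ∃ y ∈ B2 \ B1, symmDiff B1 {x, y} ∈ B ∧ symmDiff B2 {x, y} ∈ B := by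
  classical
  obtain ⟨hne, hex⟩ := hB
  obtain ⟨b0, hb0⟩ := hne
  set Base : Set α → Prop := fun S => ∃ b ∈ B, S = ↑b with hBase
  have hexch : Matroid.ExchangeProperty Base := by
    rintro X Y ⟨b1, hb1, rfl⟩ ⟨b2, hb2, rfl⟩ a ha
    have ha' : a ∈ b1 \ b2 := by
      rw [Finset.mem_sdiff]; exact ⟨by exact_mod_cast ha.1, by exact_mod_cast ha.2⟩
    obtain ⟨y, hy, hyB⟩ := hex b1 hb1 b2 hb2 a ha'
    rw [Finset.mem_sdiff] at hy
    refine ⟨y, ⟨by exact_mod_cast hy.1, by exact_mod_cast hy.2⟩,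
      insert y (b1.erase a), hyB, ?_⟩
    push_cast
    rfl
  set M : Matroid α := Matroid.ofExistsFiniteIsBase Set.univ Base
    ⟨↑b0, ⟨b0, hb0, rfl⟩, b0.finite_toSet⟩ hexch (fun _ _ => Set.subset_univ _) with hM
  have hMbase : ∀ S : Set α, M.IsBase S ↔ Base S := fun S => Iff.rfl
  have hB1 : M.IsBase ↑B1 := ⟨B1, h1, rfl⟩
  have hB2 : M.IsBase ↑B2 := ⟨B2, h2, rfl⟩
  rw [Finset.mem_sdiff] at hx
  obtain ⟨hxB1, hxB2⟩ := hx
  have hxB1' : (x : α) ∈ (B1 : Set α) := by exact_mod_cast hxB1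
  have hxB2' : (x : α) ∉ (B2 : Set α) := by exact_mod_cast hxB2
  set D : Set α := ↑B1 \ {x} with hD
  have hDind : M.Indep D := hB1.indep.subset Set.diff_subset
  have hxD : x ∉ M.closure D := hB1.indep.notMem_closure_diff_of_mem hxB1'
  set T : Set α := ↑B2 ∩ M.closure D with hT
  have hTD : T ⊆ M.closure D := Set.inter_subset_right
  have hTcl : M.closure T ⊆ M.closure D :=
    M.closure_subset_closure_of_subset_closure hTD
  have hxT : x ∉ M.closure T := fun h => hxD (hTcl h)
  have hTind : M.Indep T := hB2.indep.subset Set.inter_subset_left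
  have hxE : x ∈ M.E := Set.mem_univ x
  have hxnotT : x ∉ T := fun h => hxB2' h.1
  have hxTind : M.Indep (insert x T) := by
    rw [hTind.insert_indep_iff_of_notMem hxnotT]
    exact ⟨hxE, hxT⟩
  obtain ⟨B3, hB3, hxTB3, hB3sub⟩ := hxTind.exists_isBase_subset_union_isBase hB2
  have hxB3 : x ∈ B3 := hxTB3 (Set.mem_insert _ _)
  have hTB3 : T ⊆ B3 := (Set.subset_insert _ _).trans hxTB3
  have hdiff : B3 \ ↑B2 = {x} := by
    apply Set.Subset.antisymm
    · rintro z ⟨hz1, hz2⟩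
      rcases hB3sub hz1 with h | h
      · rcases h with h | h
        · exact h
        · exact absurd h.1 hz2
      · exact absurd h hz2
    · rintro z rfl
      exact ⟨hxB3, hxB2'⟩
  have hcard : (↑B2 \ B3).encard = 1 := by
    rw [hB2.encard_diff_comm hB3, hdiff, Set.encard_singleton]
  obtain ⟨y, hy⟩ := Set.encard_eq_one.mp hcard
  have hyB2 : y ∈ (B2 : Set α) := by
    have : y ∈ (↑B2 \ B3 : Set α) := hy ▸ rfl
    exact this.1
  have hyB3 : y ∉ B3 := by
    have : y ∈ (↑B2 \ B3 : Set α) := hy ▸ rfl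
    exact this.2
  have hyT : y ∉ T := fun h => hyB3 (hTB3 h)
  have hyclD : y ∉ M.closure D := fun h => hyT ⟨hyB2, h⟩
  have hyD : y ∉ D := fun h => hyclD (M.subset_closure D (Set.subset_univ D) h)
  have hyx : y ≠ x := fun h => hxB2' (h ▸ hyB2)
  have hyB1 : y ∉ (B1 : Set α) := fun h => hyD ⟨h, hyx⟩
  -- first base : insert y (B1 \ {x})
  have hyDind : M.Indep (insert y D) := by
    rw [hDind.insert_indep_iff_of_notMem hyD]
    exact ⟨Set.mem_univ y, hyclD⟩
  have hbase1 : M.IsBase (insert y (↑B1 \ {x})) :=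
    hB1.exchange_isBase_of_indep hyB1 hyDind
  -- second base : B3 = insert x (B2 \ {y})
  have hB3eq : B3 = insert x ((B2 : Set α) \ {y}) := by
    ext z
    constructor
    · intro hz
      by_cases hzB2 : z ∈ (B2 : Set α)
      · refine Set.mem_insert_of_mem _ ⟨hzB2, ?_⟩
        rintro rfl
        exact hyB3 hz
      · have : z ∈ B3 \ (B2 : Set α) := ⟨hz, hzB2⟩
        rw [hdiff] at this
        exact Set.mem_insert_iff.mpr (Or.inl this)
    · rintro (rfl | ⟨hzB2, hzy⟩)
      · exact hxB3
      · by_contra hzB3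
        have : z ∈ (↑B2 \ B3 : Set α) := ⟨hzB2, hzB3⟩
        rw [hy] at this
        exact hzy this
  have hbase2 : M.IsBase (insert x ((B2 : Set α) \ {y})) := hB3eq ▸ hB3
  -- translate back to Finsets
  have hyB2f : y ∈ B2 := by exact_mod_cast hyB2
  have hyB1f : y ∉ B1 := fun h => hyB1 (by exact_mod_cast h)
  refine ⟨y, Finset.mem_sdiff.mpr ⟨hyB2f, hyB1f⟩, ?_, ?_⟩
  · have hcoe : ((symmDiff B1 {x, y} : Finset α) : Set α) = insert y (↑B1 \ {x}) := by
      rw [Finset.coe_symmDiff]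
      ext z
      simp only [Set.mem_symmDiff, Finset.coe_insert, Finset.coe_singleton,
        Set.mem_insert_iff, Set.mem_singleton_iff, Set.mem_diff]
      constructor
      · rintro (⟨hz, hz2⟩ | ⟨(rfl | rfl), hz2⟩)
        · exact Or.inr ⟨hz, fun h => hz2 (Or.inl h)⟩
        · exact absurd hxB1' hz2
        · exact Or.inl rfl
      · rintro (rfl | ⟨hz, hzx⟩)
        · exact Or.inr ⟨Or.inr rfl, hyB1⟩
        · exact Or.inl ⟨hz, by rintro (rfl | rfl); exacts [hzx rfl, hyB1 hz]⟩
    obtain ⟨b, hb, hbe⟩ := hbase1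
    rw [← hcoe] at hbe
    rwa [Finset.coe_inj.mp hbe]
  · have hcoe : ((symmDiff B2 {x, y} : Finset α) : Set α) = insert x (↑B2 \ {y}) := by
      rw [Finset.coe_symmDiff]
      ext z
      simp only [Set.mem_symmDiff, Finset.coe_insert, Finset.coe_singleton,
        Set.mem_insert_iff, Set.mem_singleton_iff, Set.mem_diff]
      constructor
      · rintro (⟨hz, hz2⟩ | ⟨(rfl | rfl), hz2⟩)
        · exact Or.inr ⟨hz, fun h => hz2 (Or.inr h)⟩
        · exact Or.inl rfl
        · exact absurd hyB2 hz2
      · rintro (rfl | ⟨hz, hzy⟩)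
        · exact Or.inr ⟨Or.inl rfl, hxB2'⟩
        · exact Or.inl ⟨hz, by rintro (rfl | rfl); exacts [hxB2' hz, hzy rfl]⟩
    obtain ⟨b, hb, hbe⟩ := hbase2
    rw [← hcoe] at hbe
    rwa [Finset.coe_inj.mp hbe]
end

section
/- Let B be a matroid on a finite set X. Suppose a, z ∈ X are distinct, C ⊆ X with a, z ∉ C, and both C ∪ {a} and C ∪ {z} are almost-bases of B. Then either C ∪ {a, z} is a basis, or U(C ∪ {a}) = U(C ∪ {z}), where U(D) = {x ∉ D : D ∪ {x} is a basis}. -/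
open Finset

variable {α : Type*}

theorem key_exchange [DecidableEq α] (B : Finset (Finset α))
    (hB : IsMatroid B) (C : Finset α) (a z : α)
    (haz : a ≠ z) (hzC : z ∉ C)
    (hz : AlmostBasis B (insert z C))
    (hnb : insert a (insert z C) ∉ B)
    (x : α) (hxa : x ≠ a) (hxC : x ∉ C)
    (hxB : insert x (insert a C) ∈ B) : insert x (insert z C) ∈ B := by
  obtain ⟨B0, hB0, t, htB0, hEq⟩ := hz
  have htz : t ∉ insert z C := by rw [hEq]; exact notMem_erase t B0
  have hB0eq : B0 = insert t (insert z C) := by rw [hEq, insert_erase htB0]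
  by_cases hta : t = a
  · exact absurd (hta ▸ hB0eq ▸ hB0) hnb
  by_cases htx : t = x
  · rw [htx] at hB0eq; exact hB0eq ▸ hB0
  have htB2 : t ∉ insert x (insert a C) := by
    simp only [mem_insert] at htz ⊢
    push_neg at htz ⊢
    exact ⟨htx, hta, htz.2⟩
  obtain ⟨w, hw, hw2⟩ := hB.2 B0 hB0 (insert x (insert a C)) hxB t
    (mem_sdiff.mpr ⟨htB0, htB2⟩)
  have herase : B0.erase t = insert z C := by
    rw [hB0eq, erase_insert htz]
  rw [herase] at hw2
  rw [mem_sdiff, hB0eq] at hw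
  obtain ⟨hw1, hwB0⟩ := hw
  simp only [mem_insert] at hw1 hwB0
  push_neg at hwB0
  rcases hw1 with rfl | rfl | hwC
  · exact hw2
  · exact absurd hw2 hnb
  · exact absurd hwC hwB0.2.2

theorem non_triangle [DecidableEq α] [Fintype α] (B : Finset (Finset α))
    (hB : IsMatroid B) (C : Finset α) (a z : α)
    (haz : a ≠ z) (haC : a ∉ C) (hzC : z ∉ C)
    (ha : AlmostBasis B (insert a C)) (hz : AlmostBasis B (insert z C)) :
    insert a (insert z C) ∈ B ∨ USet B (insert a C) = USet B (insert z C) := by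
  by_cases hmem : insert a (insert z C) ∈ B
  · exact Or.inl hmem
  right
  have hnb' : insert z (insert a C) ∉ B := by rwa [Finset.insert_comm]
  ext x
  simp only [USet, mem_filter, mem_univ, true_and, mem_insert, not_or]
  constructor
  · rintro ⟨⟨hxa, hxC⟩, hx⟩
    have hxz : x ≠ z := by rintro rfl; exact hnb' hx
    exact ⟨⟨hxz, hxC⟩, key_exchange B hB C a z haz hzC hz hmem x hxa hxC hx⟩
  · rintro ⟨⟨hxz, hxC⟩, hx⟩
    have hxa : x ≠ a := by rintro rfl; exact hmem hx
    exact ⟨⟨hxa, hxC⟩,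
      key_exchange B hB C z a haz.symm haC ha hnb' x hxz hxC hx⟩
end

section
/- Let B be a matroid on a finite set X. Suppose C ⊆ X and a, z, d are three distinct elements of X \ C such that C ∪ {a,z}, C ∪ {a,d}, and C ∪ {z,d} are all bases (a triangle). If e ∈ U(C ∪ {z}), then e ∈ U(C ∪ {a}) or e ∈ U(C ∪ {d}), where U(D) = {x ∉ D : D ∪ {x} is a basis}. -/
open Finset

variable {α : Type*}

theorem triangle_lemma [DecidableEq α] [Fintype α] (B : Finset (Finset α))
    (hB : IsMatroid B) (C : Finset α) (a z d : α)
    (haz : a ≠ z) (had : a ≠ d) (hzd : z ≠ d)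
    (haC : a ∉ C) (hzC : z ∉ C) (hdC : d ∉ C)
    (h1 : insert a (insert z C) ∈ B)
    (h2 : insert a (insert d C) ∈ B)
    (h3 : insert z (insert d C) ∈ B)
    (e : α) (he : e ∈ USet B (insert z C)) :
    e ∈ USet B (insert a C) ∨ e ∈ USet B (insert d C) := by
  simp only [USet, mem_filter, mem_univ, true_and, mem_insert, not_or] at he ⊢
  obtain ⟨⟨hez, heC⟩, heB⟩ := he
  by_cases hea : e = a
  · right
    subst hea
    exact ⟨⟨had, heC⟩, h2⟩
  by_cases hed : e = d
  · left
    subst hed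
    refine ⟨⟨fun h => had h.symm, heC⟩, ?_⟩
    rwa [Finset.insert_comm]
  -- main case: exchange z out of C ∪ {z, e} against C ∪ {a, d}
  obtain ⟨y, hy, hyB⟩ := hB.2 (insert e (insert z C)) heB (insert a (insert d C)) h2 z
    (Finset.mem_sdiff.mpr ⟨by simp, by simp [Ne.symm haz, hzd, hzC]⟩)
  rw [Finset.erase_insert_of_ne hez, Finset.erase_insert (by simpa using hzC)] at hyB
  simp only [mem_sdiff, mem_insert, not_or] at hy
  obtain ⟨hy1, hy2, hy3, hy4⟩ := hy
  rcases hy1 with rfl | rfl | hyC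
  · left
    refine ⟨⟨hea, heC⟩, ?_⟩
    rwa [Finset.insert_comm] at hyB
  · right
    refine ⟨⟨hed, heC⟩, ?_⟩
    rwa [Finset.insert_comm] at hyB
  · exact absurd hyC hy4
end

section
/- Let B and B* be nonempty families of subsets of a finite set X, and let L : B → B* be a linking, i.e., a bijection B ↦ B* such that for every B ∈ B and every transposition τ of X: (L1) if τ(B) ∈ B then τ(B*) ∈ B* and τ(B*) = (τ(B))*; (L2) if τ(B*) ∈ B* then τ(B) ∈ B and τ(B*) = (τ(B))*. Then for every B ∈ B, either B* = B or B* = X \ B. -/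
open Finset

variable {α : Type*}

lemma swap_image_self [DecidableEq α] {a b : α} {S : Finset α} (h : a ∈ S ↔ b ∈ S) :
    S.image (Equiv.swap a b) = S := by
  ext x
  rw [Finset.mem_image]
  constructor
  · rintro ⟨y, hy, rfl⟩
    rcases eq_or_ne y a with rfl | hya
    · simpa [Equiv.swap_apply_left] using h.mp hy
    rcases eq_or_ne y b with rfl | hyb
    · simpa [Equiv.swap_apply_right] using h.mpr hy
    · simpa [Equiv.swap_apply_of_ne_of_ne hya hyb]
  · intro hx
    refine ⟨Equiv.swap a b x, ?_, by simp⟩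
    rcases eq_or_ne x a with rfl | hxa
    · simpa [Equiv.swap_apply_left] using h.mp hx
    rcases eq_or_ne x b with rfl | hxb
    · simpa [Equiv.swap_apply_right] using h.mpr hx
    · simpa [Equiv.swap_apply_of_ne_of_ne hxa hxb]

lemma swap_image_self_iff [DecidableEq α] {a b : α} {S : Finset α}
    (h : S.image (Equiv.swap a b) = S) : (a ∈ S ↔ b ∈ S) := by
  have hi : Function.Injective (Equiv.swap a b) := (Equiv.swap a b).injective
  constructor
  · intro ha
    have : Equiv.swap a b a ∈ S.image (Equiv.swap a b) := Finset.mem_image_of_mem _ ha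
    rwa [h, Equiv.swap_apply_left] at this
  · intro hb
    have : Equiv.swap a b b ∈ S.image (Equiv.swap a b) := Finset.mem_image_of_mem _ hb
    rwa [h, Equiv.swap_apply_right] at this

theorem linking_id_or_comp_basis [DecidableEq α] [Fintype α]
    (B Bs : Finset (Finset α)) (hB : B.Nonempty) (hBs : Bs.Nonempty)
    (L : Finset α → Finset α) (hL : IsLinking B Bs L) :
    ∀ B0 ∈ B, L B0 = B0 ∨ L B0 = Finset.univ \ B0 := by
  obtain ⟨hbij, hlink⟩ := hL
  intro B0 hB0
  have key : ∀ a b : α, (a ∈ B0 ↔ b ∈ B0) ↔ (a ∈ L B0 ↔ b ∈ L B0) := by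
    intro a b
    rcases eq_or_ne a b with rfl | hab
    · simp
    have hLB0 : L B0 ∈ Bs := hbij.1 hB0
    constructor
    · intro h
      have himg : B0.image (Equiv.swap a b) = B0 := swap_image_self h
      have := ((hlink B0 hB0 a b hab).1 (by rw [himg]; exact hB0)).2
      rw [himg] at this
      exact swap_image_self_iff this
    · intro h
      have himg : (L B0).image (Equiv.swap a b) = L B0 := swap_image_self h
      have h2 := (hlink B0 hB0 a b hab).2 (by rw [himg]; exact hLB0)
      have hBimg : B0.image (Equiv.swap a b) ∈ B := h2.1
      have : L B0 = L (B0.image (Equiv.swap a b)) := by rw [← himg, h2.2]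
      have heq : B0 = B0.image (Equiv.swap a b) := hbij.2.1 hB0 hBimg this
      exact swap_image_self_iff heq.symm
  by_cases hall : ∀ x, x ∈ L B0 ↔ x ∈ B0
  · left; ext x; exact hall x
  · right
    push_neg at hall
    obtain ⟨a, ha⟩ := hall
    ext x
    simp only [Finset.mem_sdiff, Finset.mem_univ, true_and]
    have := key a x
    by_cases hxB : x ∈ B0 <;> by_cases hxL : x ∈ L B0 <;>
      by_cases haB : a ∈ B0 <;> by_cases haL : a ∈ L B0 <;> tauto
end

section
/- Let L : B → B*, B ↦ B*, be a linking between pre-matroids on a finite set X. Suppose S is an almost-basis of B, A is an almost-basis of B*, x, y ∈ U(S) with x ≠ y, and (S ∪ {x})* = A ∪ {y}. Then the set D = A ∪ {y} satisfies: τ_{xy}(D) ∈ B* and exactly one of x, y lies in D, where τ_{xy} is the transposition of x and y. -/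
open Finset

variable {α : Type*}

theorem xy_flip [DecidableEq α] [Fintype α]
    (B Bs : Finset (Finset α)) (hB : B.Nonempty) (hBs : Bs.Nonempty)
    (L : Finset α → Finset α) (hL : IsLinking B Bs L)
    (S A : Finset α) (hS : AlmostBasis B S) (hA : AlmostBasis Bs A)
    (x y : α) (hx : x ∈ USet B S) (hy : y ∈ USet B S) (hxy : x ≠ y)
    (hLx : L (insert x S) = insert y A) :
    (insert y A).image (Equiv.swap x y) ∈ Bs ∧
      Xor' (x ∈ insert y A) (y ∈ insert y A) := by
  simp only [USet, Finset.mem_filter] at hx hy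
  obtain ⟨-, hxS, hxB⟩ := hx
  obtain ⟨-, hyS, hyB⟩ := hy
  have himg : (insert x S).image (Equiv.swap x y) = insert y S := by
    rw [Finset.image_insert, Equiv.swap_apply_left]
    congr 1
    rw [Finset.image_congr (g := id), Finset.image_id]
    intro a ha
    exact Equiv.swap_apply_of_ne_of_ne (fun h => hxS (h ▸ ha)) (fun h => hyS (h ▸ ha))
  have hfwd := ((hL.2 (insert x S) hxB x y hxy).1 (by rw [himg]; exact hyB))
  have h1 : (insert y A).image (Equiv.swap x y) ∈ Bs := by rw [← hLx]; exact hfwd.1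
  refine ⟨h1, Or.inr ⟨Finset.mem_insert_self y A, ?_⟩⟩
  intro hxA
  have hfix : (insert y A).image (Equiv.swap x y) = insert y A := by
    ext a
    simp only [Finset.mem_image]
    constructor
    · rintro ⟨b, hb, rfl⟩
      rcases eq_or_ne b x with rfl | hbx
      · rw [Equiv.swap_apply_left]; exact Finset.mem_insert_self y A
      rcases eq_or_ne b y with rfl | hby
      · rw [Equiv.swap_apply_right]; exact hxA
      · rw [Equiv.swap_apply_of_ne_of_ne hbx hby]; exact hb
    · intro ha
      refine ⟨Equiv.swap x y a, ?_, Equiv.swap_apply_self x y a⟩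
      rcases eq_or_ne a x with rfl | hax
      · rw [Equiv.swap_apply_left]; exact Finset.mem_insert_self y A
      rcases eq_or_ne a y with rfl | hay
      · rw [Equiv.swap_apply_right]; exact hxA
      · rw [Equiv.swap_apply_of_ne_of_ne hax hay]; exact ha
  have heq : L (insert x S) = L (insert y S) := by
    rw [hLx, ← hfix, ← hLx, hfwd.2, himg]
  have hinj : insert x S = insert y S := hL.1.injOn hxB hyB heq
  have : x ∈ insert y S := hinj ▸ Finset.mem_insert_self x S
  rcases Finset.mem_insert.1 this with h | h
  · exact hxy h
  · exact hxS h
end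

section
/- Let B be a matroid on a finite set X, let A be an almost-basis, and let Y ⊆ X be disjoint from A with A ∪ {y} not a basis for every y ∈ Y. Suppose C is a circuit and c ∈ C satisfies C \ {c} ⊆ A ∪ Y and c ∉ A ∪ Y. Then A ∪ Y ∪ {c} contains no basis. -/
open Finset

variable {α : Type*}

theorem circuit_no_basis [DecidableEq α] (B : Finset (Finset α))
    (hB : IsMatroid B) (A Y : Finset α)
    (hA : AlmostBasis B A) (hdisj : Disjoint A Y)
    (hY : ∀ y ∈ Y, insert y A ∉ B)
    (C : Finset α) (hC : IsCircuit B C) (c : α) (hc : c ∈ C)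
    (hCs : C.erase c ⊆ A ∪ Y) (hcAY : c ∉ A ∪ Y) :
    ∀ B0 ∈ B, ¬ B0 ⊆ insert c (A ∪ Y) := by
  obtain ⟨hne, hex⟩ := hB
  -- Step A: no basis is contained in A ∪ Y
  have stepA : ∀ b ∈ B, ¬ b ⊆ A ∪ Y := by
    obtain ⟨B0, hB0, x, hx, rfl⟩ := hA
    intro b hb hsub
    by_cases hxb : x ∈ b
    · have hxY : x ∈ Y := by
        rcases Finset.mem_union.mp (hsub hxb) with h | h
        · exact absurd h (Finset.notMem_erase x B0)
        · exact h
      exact hY x hxY (by rwa [Finset.insert_erase hx])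
    · obtain ⟨y, hy, hins⟩ := hex B0 hB0 b hb x (Finset.mem_sdiff.mpr ⟨hx, hxb⟩)
      rw [Finset.mem_sdiff] at hy
      have hyY : y ∈ Y := by
        rcases Finset.mem_union.mp (hsub hy.1) with h | h
        · exact absurd (Finset.mem_of_mem_erase h) hy.2
        · exact h
      exact hY y hyY hins
  intro B1 hB1 hsub
  -- choose a basis B2 containing C.erase c minimizing |B2 \ B1|
  obtain ⟨B2', hB2', hsub2'⟩ := hC.2 c hc
  obtain ⟨B2, hB2mem, hmin⟩ := Finset.exists_min_image
    (B.filter fun b => C.erase c ⊆ b) (fun b => (b \ B1).card)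
    ⟨B2', Finset.mem_filter.mpr ⟨hB2', hsub2'⟩⟩
  rw [Finset.mem_filter] at hB2mem
  obtain ⟨hB2, hCsub⟩ := hB2mem
  have hcB2 : c ∉ B2 := by
    intro h
    refine hC.1 ⟨B2, hB2, fun e he => ?_⟩
    by_cases hec : e = c
    · exact hec ▸ h
    · exact hCsub (Finset.mem_erase.mpr ⟨hec, he⟩)
  have hsd : B2 \ B1 ⊆ C.erase c := by
    intro z hz
    by_contra hzC
    rw [Finset.mem_sdiff] at hz
    obtain ⟨w, hw, hins⟩ := hex B2 hB2 B1 hB1 z (Finset.mem_sdiff.mpr hz)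
    rw [Finset.mem_sdiff] at hw
    have hmem : insert w (B2.erase z) ∈ B.filter fun b => C.erase c ⊆ b := by
      refine Finset.mem_filter.mpr ⟨hins, fun e he => ?_⟩
      exact Finset.mem_insert_of_mem
        (Finset.mem_erase.mpr ⟨fun h => hzC (h ▸ he), hCsub he⟩)
    have hcard := hmin _ hmem
    have h1 : (insert w (B2.erase z)) \ B1 = (B2 \ B1).erase z := by
      ext e
      simp only [Finset.mem_sdiff, Finset.mem_erase, Finset.mem_insert]
      constructor
      · rintro ⟨h | ⟨hez, heB2⟩, heB1⟩
        · exact absurd (h ▸ hw.1) heB1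
        · exact ⟨hez, heB2, heB1⟩
      · rintro ⟨hez, heB2, heB1⟩
        exact ⟨Or.inr ⟨hez, heB2⟩, heB1⟩
    rw [h1] at hcard
    have hlt := Finset.card_erase_lt_of_mem (Finset.mem_sdiff.mpr hz)
    omega
  have hB2sub : B2 ⊆ A ∪ Y := by
    intro e he
    by_cases heB1 : e ∈ B1
    · rcases Finset.mem_insert.mp (hsub heB1) with h | h
      · exact absurd (h ▸ he) hcB2
      · exact h
    · exact hCs (hsd (Finset.mem_sdiff.mpr ⟨he, heB1⟩))
  exact stepA B2 hB2 hB2sub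
end
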